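/- The isoperimetric constant of the radially symmetric antitree A satisfies α(A) = inf_{n ∈ ℕ} s_n s_{n+1} / (Σ_{k=0}^n s_k s_{k+1} ℓ_k). -/

import Mathlib

open Finset
open scoped BigOperators

/-- The radially symmetric antitree with sphere numbers `s n`:  the vertex set
is `Σ n, Fin (s n)` and two vertices are adjacent iff they lie in consecutive
combinatorial spheres. -/
def antitreeGraph (s : ℕ → ℕ) : SimpleGraph (Σ n : ℕ, Fin (s n)) where
  Adj v w := v.1 = w.1 + 1 ∨ w.1 = v.1 + 1
  symm := ⟨by intro v w h; exact h.symm⟩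
  loopless := ⟨by intro v h; rcases h with h | h <;> omega⟩

/-- Length of an edge of the antitree: an edge joining sphere `n` and sphere
`n+1` has length `ℓ n` (the level of an edge is the minimum of the levels of
its endpoints). -/
noncomputable def antitreeEdgeLength (s : ℕ → ℕ) (ℓ : ℕ → ℝ) :
    Sym2 (Σ n : ℕ, Fin (s n)) → ℝ :=
  Sym2.lift ⟨fun v w => ℓ (min v.1 w.1), fun v w => by simp [min_comm]⟩

lemma at_step (s1 s2 lm L c e i1 i2 : ℝ) (hs1 : 1 ≤ s1) (hs2 : 1 ≤ s2)
    (hc : 0 ≤ c) (hL : 0 ≤ L) (hl : 0 ≤ lm)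
    (hcon : c * (L + s1 * s2 * lm) ≤ s1 * s2)
    (hi1 : 0 ≤ i1) (hi2 : 0 ≤ i2)
    (h1 : i1 * s2 ≤ e) (h2 : i2 * s1 ≤ e) :
    c * e * lm + c * L * i1 / s1 ≤
      (2 * e - i2 * s1 - i1 * s2) + c * (L + s1 * s2 * lm) * i2 / s2 := by
  have h01 : (0:ℝ) < s1 := lt_of_lt_of_le one_pos hs1
  have h02 : (0:ℝ) < s2 := lt_of_lt_of_le one_pos hs2
  have h12 : (0:ℝ) < s1 * s2 := mul_pos h01 h02
  have hcl : c * lm ≤ 1 := by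
    have hcL : 0 ≤ c * L := mul_nonneg hc hL
    nlinarith
  have key : (c * e * lm + c * L * i1 / s1) * (s1 * s2) ≤
      ((2 * e - i2 * s1 - i1 * s2) + c * (L + s1 * s2 * lm) * i2 / s2) * (s1 * s2) := by
    have e1 : (c * L * i1 / s1) * (s1 * s2) = c * L * i1 * s2 := by
      field_simp
    have e2 : (c * (L + s1 * s2 * lm) * i2 / s2) * (s1 * s2) = c * (L + s1 * s2 * lm) * i2 * s1 := by
      field_simp
    rw [add_mul, add_mul, e1, e2]
    rcases le_total (i1 * s2) (i2 * s1) with h | h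
    · have T1 : 0 ≤ (2 - c * lm) * ((e - i2 * s1) * (s1 * s2)) := by
        apply mul_nonneg (by linarith) (mul_nonneg (by linarith) (le_of_lt h12))
      have T2 : 0 ≤ (s1 * s2 + c * L) * (i2 * s1 - i1 * s2) := by
        apply mul_nonneg (by nlinarith) (by linarith)
      nlinarith [T1, T2]
    · have T1 : 0 ≤ (2 - c * lm) * ((e - i1 * s2) * (s1 * s2)) := by
        apply mul_nonneg (by linarith) (mul_nonneg (by linarith) (le_of_lt h12))
      have T2 : 0 ≤ (s1 * s2 - c * s1 * s2 * lm - c * L) * (i1 * s2 - i2 * s1) := by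
        apply mul_nonneg (by nlinarith) (by linarith)
      nlinarith [T1, T2]
  exact le_of_mul_le_mul_right key h12

lemma at_key (s : ℕ → ℝ) (hs : ∀ n, 1 ≤ s n) (ℓ : ℕ → ℝ) (hℓ : ∀ n, 0 < ℓ n)
    (c : ℝ) (hc : 0 ≤ c)
    (hcF : ∀ k, c * (∑ j ∈ range (k + 1), s j * s (j + 1) * ℓ j) ≤ s k * s (k + 1))
    (E I : ℕ → ℝ) (hE0 : ∀ k, 0 ≤ E k) (hI0 : ∀ k, 0 ≤ I k)
    (h1 : ∀ k, I k * s (k + 1) ≤ E k) (h2 : ∀ k, I (k + 1) * s k ≤ E k)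
    (M : ℕ) (hIM : I M = 0) :
    c * ∑ k ∈ range M, E k * ℓ k ≤
      ∑ k ∈ range M, (2 * E k - I (k + 1) * s k - I k * s (k + 1)) := by
  -- downward induction: claim for Ico m M
  have main : ∀ j m, m + j = M →
      c * (∑ k ∈ Finset.Ico m M, E k * ℓ k)
        + c * (∑ i ∈ range m, s i * s (i+1) * ℓ i) * I m / s m ≤
      ∑ k ∈ Finset.Ico m M, (2 * E k - I (k + 1) * s k - I k * s (k + 1)) := by
    intro j
    induction j with
    | zero =>
      intro m hm
      simp only [Nat.add_zero] at hm
      subst hm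
      simp [hIM]
    | succ j ih =>
      intro m hm
      have hmM : m < M := by omega
      have ihm := ih (m + 1) (by omega)
      rw [Finset.sum_eq_sum_Ico_succ_bot hmM, Finset.sum_eq_sum_Ico_succ_bot hmM]
      have hstep := at_step (s m) (s (m+1)) (ℓ m) (∑ i ∈ range m, s i * s (i+1) * ℓ i) c
        (E m) (I m) (I (m+1)) (hs m) (hs (m+1)) hc
        (Finset.sum_nonneg fun i _ => by
          have := hs i; have := hs (i+1); have := (hℓ i).le; positivity)
        (hℓ m).le
        (by have := hcF m; rwa [Finset.sum_range_succ] at this)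
        (hI0 m) (hI0 (m+1)) (h1 m) (h2 m)
      have hL' : (∑ i ∈ range (m+1), s i * s (i+1) * ℓ i)
          = (∑ i ∈ range m, s i * s (i+1) * ℓ i) + s m * s (m+1) * ℓ m := by
        rw [Finset.sum_range_succ]
      rw [hL'] at ihm
      linarith
  have h0 := main M 0 (by omega)
  simp only [Finset.sum_range_zero, zero_mul, mul_zero, zero_div, add_zero,
    ← Finset.range_eq_Ico] at h0
  exact h0

namespace ATaux
attribute [local instance] Classical.propDecidable
variable {s : ℕ → ℕ}

abbrev V (s : ℕ → ℕ) := (Σ n : ℕ, Fin (s n))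

/-- the Finset of vertices at level `k` -/
def levelFinset (s : ℕ → ℕ) (k : ℕ) : Finset (V s) :=
  Finset.univ.map ⟨Sigma.mk k, sigma_mk_injective⟩

lemma mem_levelFinset {k : ℕ} {v : V s} : v ∈ levelFinset s k ↔ v.1 = k := by
  constructor
  · rintro h
    simp only [levelFinset, Finset.mem_map, Function.Embedding.coeFn_mk] at h
    obtain ⟨i, _, rfl⟩ := h; rfl
  · rintro h
    obtain ⟨n, i⟩ := v
    cases h
    simp [levelFinset]

lemma coe_levelFinset (k : ℕ) : (levelFinset s k : Set (V s)) = {v : V s | v.1 = k} := by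
  ext v; simp [mem_levelFinset]

lemma card_levelFinset (k : ℕ) : (levelFinset s k).card = s k := by
  simp [levelFinset]

lemma ncard_levelSet (k : ℕ) : {v : V s | v.1 = k}.ncard = s k := by
  rw [← coe_levelFinset, Set.ncard_coe_finset, card_levelFinset]

lemma adj_iff {v w : V s} : (antitreeGraph s).Adj v w ↔ (v.1 = w.1 + 1 ∨ w.1 = v.1 + 1) :=
  Iff.rfl

/-- A-neighbours of `v` : the two adjacent spheres -/
lemma nbrA_eq (v : V s) :
    (antitreeGraph s).neighborSet v
      = {w : V s | w.1 = v.1 + 1} ∪ {w : V s | v.1 = w.1 + 1} := by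
  ext w
  simp only [SimpleGraph.mem_neighborSet, adj_iff, Set.mem_union, Set.mem_setOf_eq]
  tauto

lemma dnA_eq_level {k : ℕ} : {w : V s | k + 1 = w.1 + 1} = {w : V s | w.1 = k} := by
  ext w; simp only [Set.mem_setOf_eq]; omega

lemma dnA_eq_empty : {w : V s | 0 = w.1 + 1} = (∅ : Set (V s)) := by
  ext w; simp

lemma nbrA_finite (v : V s) : ((antitreeGraph s).neighborSet v).Finite := by
  rw [nbrA_eq]
  refine Set.Finite.union ?_ ?_
  · rw [← coe_levelFinset]; exact (levelFinset s _).finite_toSet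
  · rcases v with ⟨(_ | k), i⟩
    · rw [dnA_eq_empty]; exact Set.finite_empty
    · rw [dnA_eq_level, ← coe_levelFinset]; exact (levelFinset s _).finite_toSet

lemma ncard_nbrA (v : V s) :
    ((antitreeGraph s).neighborSet v).ncard
      = s (v.1 + 1) + (if v.1 = 0 then 0 else s (v.1 - 1)) := by
  rw [nbrA_eq]
  rcases v with ⟨(_ | k), i⟩
  · simp only [dnA_eq_empty]
    rw [Set.union_empty, ncard_levelSet]
    simp
  · simp only []
    rw [dnA_eq_level, Set.ncard_union_eq ?disj ?f1 ?f2, ncard_levelSet, ncard_levelSet]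
    case disj =>
      rw [Set.disjoint_left]; intro w hw hw'
      simp only [Set.mem_setOf_eq] at hw hw'; omega
    case f1 => rw [← coe_levelFinset]; exact (levelFinset s _).finite_toSet
    case f2 => rw [← coe_levelFinset]; exact (levelFinset s _).finite_toSet
    simp


variable (G' : (antitreeGraph s).Subgraph)

/-- up neighbours of v in the subgraph -/
def upSet (v : V s) : Set (V s) := {w | G'.Adj v w ∧ w.1 = v.1 + 1}

/-- down neighbours of v in the subgraph -/
def dnSet (v : V s) : Set (V s) := {w | G'.Adj v w ∧ v.1 = w.1 + 1}

lemma nbr_eq_up_union_dn (v : V s) :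
    G'.neighborSet v = upSet G' v ∪ dnSet G' v := by
  ext w
  simp only [SimpleGraph.Subgraph.mem_neighborSet, upSet, dnSet, Set.mem_union,
    Set.mem_setOf_eq]
  constructor
  · intro h
    rcases (G'.adj_sub h) with h' | h'
    · exact Or.inr ⟨h, h'⟩
    · exact Or.inl ⟨h, h'⟩
  · tauto

lemma upSet_subset_nbr (v : V s) : upSet G' v ⊆ G'.neighborSet v := fun w hw => hw.1
lemma dnSet_subset_nbr (v : V s) : dnSet G' v ⊆ G'.neighborSet v := fun w hw => hw.1

lemma nbr_subset_nbrA (v : V s) :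
    G'.neighborSet v ⊆ (antitreeGraph s).neighborSet v := fun _ h => G'.adj_sub h

variable {G'}

lemma nbr_finite (hfin : G'.verts.Finite) (v : V s) : (G'.neighborSet v).Finite :=
  hfin.subset (fun w hw => G'.edge_vert (G'.adj_symm hw))

lemma deg_split (hfin : G'.verts.Finite) (v : V s) :
    (G'.neighborSet v).ncard = (upSet G' v).ncard + (dnSet G' v).ncard := by
  have hu : (upSet G' v).Finite :=
    (nbr_finite hfin v).subset (upSet_subset_nbr G' v)
  have hd : (dnSet G' v).Finite :=
    (nbr_finite hfin v).subset (dnSet_subset_nbr G' v)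
  have hdisj : Disjoint (upSet G' v) (dnSet G' v) := by
    rw [Set.disjoint_left]; intro w hw hw'
    obtain ⟨-, h1⟩ := hw; obtain ⟨-, h2⟩ := hw'; omega
  rw [nbr_eq_up_union_dn, Set.ncard_union_eq hdisj hu hd]

/-- interior vertex: all potential neighbours present -/
def Intr (v : V s) : Prop := G'.neighborSet v = (antitreeGraph s).neighborSet v

lemma not_bdry_iff (hfin : G'.verts.Finite) (v : V s) :
    ¬ ((G'.neighborSet v).ncard < ((antitreeGraph s).neighborSet v).ncard)
      ↔ Intr (G' := G') v := by
  constructor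
  · intro h
    have hle : ((antitreeGraph s).neighborSet v).ncard ≤ (G'.neighborSet v).ncard := not_lt.mp h
    exact Set.eq_of_subset_of_ncard_le (nbr_subset_nbrA G' v) hle (nbrA_finite v)
  · intro h
    rw [Intr] at h
    rw [h]
    exact lt_irrefl _

lemma Intr.upSet_eq {v : V s} (h : Intr (G' := G') v) :
    upSet G' v = {w : V s | w.1 = v.1 + 1} := by
  ext w
  simp only [upSet, Set.mem_setOf_eq]
  constructor
  · rintro ⟨-, h2⟩; exact h2
  · intro hw
    refine ⟨?_, hw⟩
    have : w ∈ G'.neighborSet v := by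
      rw [Intr] at h; rw [h, nbrA_eq]; exact Or.inl hw
    exact this

lemma Intr.ud {v : V s} (h : Intr (G' := G') v) :
    (upSet G' v).ncard = s (v.1 + 1) := by
  rw [h.upSet_eq, ncard_levelSet]

lemma Intr.dnSet_eq {v : V s} (h : Intr (G' := G') v) :
    dnSet G' v = {w : V s | v.1 = w.1 + 1} := by
  ext w
  simp only [dnSet, Set.mem_setOf_eq]
  constructor
  · rintro ⟨-, h2⟩; exact h2
  · intro hw
    refine ⟨?_, hw⟩
    have : w ∈ G'.neighborSet v := by
      rw [Intr] at h; rw [h, nbrA_eq]; exact Or.inr hw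
    exact this

lemma Intr.dd {v : V s} {k : ℕ} (h : Intr (G' := G') v) (hk : v.1 = k + 1) :
    (dnSet G' v).ncard = s k := by
  rw [h.dnSet_eq, hk, dnA_eq_level, ncard_levelSet]

lemma Intr.dd_zero {v : V s} (h : Intr (G' := G') v) (hk : v.1 = 0) :
    (dnSet G' v).ncard = 0 := by
  rw [h.dnSet_eq, hk, dnA_eq_empty, Set.ncard_empty]


section counting
variable (hfin : G'.verts.Finite)

/-- the finset of ordered "upward" adjacent pairs of the subgraph -/
noncomputable def EP (hfin : G'.verts.Finite) : Finset (V s × V s) :=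
  (hfin.toFinset ×ˢ hfin.toFinset).filter
    (fun p => G'.Adj p.1 p.2 ∧ p.2.1 = p.1.1 + 1)

lemma mem_EP {p : V s × V s} :
    p ∈ EP hfin ↔ G'.Adj p.1 p.2 ∧ p.2.1 = p.1.1 + 1 := by
  simp only [EP, Finset.mem_filter, Finset.mem_product, Set.Finite.mem_toFinset,
    and_iff_right_iff_imp]
  rintro ⟨h, -⟩
  exact ⟨G'.edge_vert h, G'.edge_vert (G'.adj_symm h)⟩

/-- number of edges between sphere `k` and sphere `k+1` -/
noncomputable def ECount (hfin : G'.verts.Finite) (k : ℕ) : ℕ :=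
  ((EP hfin).filter (fun p => p.1.1 = k)).card

/-- finset version of the up-neighbour set -/
lemma upSet_eq_coe (v : V s) :
    upSet G' v = ↑(hfin.toFinset.filter (fun w => G'.Adj v w ∧ w.1 = v.1 + 1)) := by
  ext w
  simp only [upSet, Set.mem_setOf_eq, Finset.coe_filter, Set.Finite.mem_toFinset]
  constructor
  · rintro ⟨h1, h2⟩; exact ⟨G'.edge_vert (G'.adj_symm h1), h1, h2⟩
  · tauto

lemma dnSet_eq_coe (v : V s) :
    dnSet G' v = ↑(hfin.toFinset.filter (fun w => G'.Adj v w ∧ v.1 = w.1 + 1)) := by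
  ext w
  simp only [dnSet, Set.mem_setOf_eq, Finset.coe_filter, Set.Finite.mem_toFinset]
  constructor
  · rintro ⟨h1, h2⟩; exact ⟨G'.edge_vert (G'.adj_symm h1), h1, h2⟩
  · tauto

lemma ECount_eq_sum_ud (k : ℕ) :
    ECount hfin k
      = ∑ v ∈ hfin.toFinset.filter (fun v => v.1 = k), (upSet G' v).ncard := by
  rw [ECount]
  rw [Finset.card_eq_sum_card_fiberwise
    (f := fun p : V s × V s => p.1) (t := hfin.toFinset.filter (fun v => v.1 = k)) ?hmap]
  case hmap =>
    intro p hp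
    rw [Finset.mem_coe, Finset.mem_filter] at hp
    obtain ⟨hp1, hp2⟩ := hp
    rw [mem_EP] at hp1
    simp only [Finset.mem_coe, Finset.mem_filter, Set.Finite.mem_toFinset]
    exact ⟨G'.edge_vert hp1.1, hp2⟩
  refine Finset.sum_congr rfl (fun v hv => ?_)
  rw [Finset.mem_filter, Set.Finite.mem_toFinset] at hv
  rw [upSet_eq_coe hfin]
  rw [Set.ncard_coe_finset]
  apply Finset.card_bij (fun p _ => p.2)
  · intro p hp
    simp only [Finset.mem_filter, mem_EP] at hp
    obtain ⟨⟨⟨ha, hl⟩, -⟩, h1⟩ := hp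
    subst h1
    simp only [Finset.mem_filter, Set.Finite.mem_toFinset]
    exact ⟨G'.edge_vert (G'.adj_symm ha), ha, by omega⟩
  · intro p hp q hq hpq
    simp only [Finset.mem_filter] at hp hq
    have : p.1 = q.1 := hp.2.trans hq.2.symm
    exact Prod.ext this hpq
  · intro w hw
    simp only [Finset.mem_filter, Set.Finite.mem_toFinset] at hw
    obtain ⟨hw1, hw2, hw3⟩ := hw
    refine ⟨(v, w), ?_, rfl⟩
    simp only [Finset.mem_filter, mem_EP]
    exact ⟨⟨⟨hw2, hw3⟩, hv.2⟩, trivial⟩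

lemma ECount_eq_sum_dd (k : ℕ) :
    ECount hfin k
      = ∑ v ∈ hfin.toFinset.filter (fun v => v.1 = k + 1), (dnSet G' v).ncard := by
  rw [ECount]
  rw [Finset.card_eq_sum_card_fiberwise
    (f := fun p : V s × V s => p.2) (t := hfin.toFinset.filter (fun v => v.1 = k + 1)) ?hmap]
  case hmap =>
    intro p hp
    rw [Finset.mem_coe, Finset.mem_filter] at hp
    obtain ⟨hp1, hp2⟩ := hp
    rw [mem_EP] at hp1
    simp only [Finset.mem_coe, Finset.mem_filter, Set.Finite.mem_toFinset]
    refine ⟨G'.edge_vert (G'.adj_symm hp1.1), by omega⟩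
  refine Finset.sum_congr rfl (fun v hv => ?_)
  rw [Finset.mem_filter, Set.Finite.mem_toFinset] at hv
  rw [dnSet_eq_coe hfin]
  rw [Set.ncard_coe_finset]
  apply Finset.card_bij (fun p _ => p.1)
  · intro p hp
    simp only [Finset.mem_filter, mem_EP] at hp
    obtain ⟨⟨⟨ha, hl⟩, hk⟩, h1⟩ := hp
    subst h1
    simp only [Finset.mem_filter, Set.Finite.mem_toFinset]
    exact ⟨G'.edge_vert ha, G'.adj_symm ha, by omega⟩
  · intro p hp q hq hpq
    simp only [Finset.mem_filter] at hp hq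
    have : p.2 = q.2 := hp.2.trans hq.2.symm
    exact Prod.ext hpq this
  · intro w hw
    simp only [Finset.mem_filter, Set.Finite.mem_toFinset] at hw
    obtain ⟨hw1, hw2, hw3⟩ := hw
    refine ⟨(w, v), ?_, rfl⟩
    simp only [Finset.mem_filter, mem_EP]
    exact ⟨⟨⟨G'.adj_symm hw2, hw3⟩, by have := hv.2; omega⟩, trivial⟩


variable (ℓ : ℕ → ℝ)

lemma edgeLength_mk (a b : V s) :
    antitreeEdgeLength s ℓ s(a, b) = ℓ (min a.1 b.1) := by
  simp [antitreeEdgeLength]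

lemma edgeSet_eq_image :
    G'.edgeSet = ↑((EP hfin).image (fun p => s(p.1, p.2))) := by
  ext e
  induction e with
  | h a b =>
    simp only [SimpleGraph.Subgraph.mem_edgeSet, Finset.coe_image, Set.mem_image,
      Finset.mem_coe]
    constructor
    · intro h
      rcases (G'.adj_sub h) with h' | h'
      · refine ⟨(b, a), ?_, ?_⟩
        · rw [mem_EP]; exact ⟨G'.adj_symm h, h'⟩
        · exact Sym2.eq_swap
      · refine ⟨(a, b), ?_, rfl⟩
        rw [mem_EP]; exact ⟨h, h'⟩
    · rintro ⟨p, hp, he⟩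
      rw [mem_EP] at hp
      rw [Sym2.eq_iff] at he
      rcases he with ⟨h1, h2⟩ | ⟨h1, h2⟩
      · rw [← h1, ← h2]; exact hp.1
      · rw [← h1, ← h2]; exact G'.adj_symm hp.1

lemma vol_eq_sum_EP :
    ∑ᶠ e ∈ G'.edgeSet, antitreeEdgeLength s ℓ e
      = ∑ p ∈ EP hfin, ℓ p.1.1 := by
  rw [edgeSet_eq_image hfin, finsum_mem_coe_finset, Finset.sum_image ?inj]
  case inj =>
    intro p hp q hq hpq
    rw [Finset.mem_coe, mem_EP] at hp hq
    rw [Sym2.eq_iff] at hpq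
    rcases hpq with ⟨h1, h2⟩ | ⟨h1, h2⟩
    · exact Prod.ext h1 h2
    · exfalso
      have := hp.2
      have := hq.2
      rw [← h1, ← h2] at this
      omega
  refine Finset.sum_congr rfl (fun p hp => ?_)
  rw [mem_EP] at hp
  rw [edgeLength_mk]
  congr 1
  omega

lemma vol_eq_sum_levels {M : ℕ} (hM : ∀ v ∈ G'.verts, v.1 < M) :
    ∑ᶠ e ∈ G'.edgeSet, antitreeEdgeLength s ℓ e
      = ∑ k ∈ Finset.range M, (ECount hfin k : ℝ) * ℓ k := by
  rw [vol_eq_sum_EP hfin]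
  have hmap : ∀ p ∈ EP hfin, (fun p : V s × V s => p.1.1) p ∈ Finset.range M := by
    intro p hp
    rw [mem_EP] at hp
    exact Finset.mem_range.mpr (hM p.1 (G'.edge_vert hp.1))
  rw [← Finset.sum_fiberwise_of_maps_to hmap (fun p : V s × V s => ℓ p.1.1)]
  refine Finset.sum_congr rfl (fun k _ => ?_)
  have hconst : ∀ p ∈ (EP hfin).filter (fun p => p.1.1 = k), ℓ p.1.1 = ℓ k := by
    intro p hp; rw [Finset.mem_filter] at hp; rw [hp.2]
  rw [Finset.sum_congr rfl hconst, Finset.sum_const, nsmul_eq_mul, ECount]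


/-- number of interior vertices at level `k` -/
noncomputable def ICount (hfin : G'.verts.Finite) (k : ℕ) : ℕ :=
  (hfin.toFinset.filter (fun v => Intr (G' := G') v ∧ v.1 = k)).card

def dval (s : ℕ → ℕ) (k : ℕ) : ℕ := if k = 0 then 0 else s (k - 1)

lemma ICount_mul_le_ECount (k : ℕ) :
    ICount hfin k * s (k + 1) ≤ ECount hfin k := by
  rw [ECount_eq_sum_ud hfin k]
  calc ICount hfin k * s (k + 1)
      = ∑ v ∈ hfin.toFinset.filter (fun v => Intr (G' := G') v ∧ v.1 = k),
          (upSet G' v).ncard := by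
        rw [Finset.sum_congr rfl (fun v hv => ?_), Finset.sum_const, smul_eq_mul, ICount]
        rw [Finset.mem_filter] at hv
        rw [hv.2.1.ud, hv.2.2]
    _ ≤ _ := by
        apply Finset.sum_le_sum_of_subset
        intro v hv
        rw [Finset.mem_filter] at hv ⊢
        exact ⟨hv.1, hv.2.2⟩

lemma ICount_succ_mul_le_ECount (k : ℕ) :
    ICount hfin (k + 1) * s k ≤ ECount hfin k := by
  rw [ECount_eq_sum_dd hfin k]
  calc ICount hfin (k + 1) * s k
      = ∑ v ∈ hfin.toFinset.filter (fun v => Intr (G' := G') v ∧ v.1 = k + 1),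
          (dnSet G' v).ncard := by
        rw [Finset.sum_congr rfl (fun v hv => ?_), Finset.sum_const, smul_eq_mul, ICount]
        rw [Finset.mem_filter] at hv
        rw [hv.2.1.dd hv.2.2]
    _ ≤ _ := by
        apply Finset.sum_le_sum_of_subset
        intro v hv
        rw [Finset.mem_filter] at hv ⊢
        exact ⟨hv.1, hv.2.2⟩

lemma sum_ud_eq (M : ℕ) (hM : ∀ v ∈ G'.verts, v.1 < M) :
    ∑ v ∈ hfin.toFinset, (upSet G' v).ncard = ∑ k ∈ Finset.range M, ECount hfin k := by
  have hmap : ∀ v ∈ hfin.toFinset, (fun v : V s => v.1) v ∈ Finset.range M := by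
    intro v hv
    rw [Set.Finite.mem_toFinset] at hv
    exact Finset.mem_range.mpr (hM v hv)
  rw [← Finset.sum_fiberwise_of_maps_to hmap (fun v => (upSet G' v).ncard)]
  exact Finset.sum_congr rfl (fun k _ => (ECount_eq_sum_ud hfin k).symm)

lemma dn_level_zero {v : V s} (hv : v.1 = 0) : (dnSet G' v).ncard = 0 := by
  have : dnSet G' v = ∅ := by
    ext w; simp only [dnSet, Set.mem_setOf_eq, Set.mem_empty_iff_false, iff_false]
    rintro ⟨-, h⟩; omega
  rw [this, Set.ncard_empty]

lemma sum_dd_eq (M : ℕ) (hM : ∀ v ∈ G'.verts, v.1 < M) :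
    ∑ v ∈ hfin.toFinset, (dnSet G' v).ncard = ∑ k ∈ Finset.range M, ECount hfin k := by
  have hmap : ∀ v ∈ hfin.toFinset, (fun v : V s => v.1) v ∈ Finset.range M := by
    intro v hv
    rw [Set.Finite.mem_toFinset] at hv
    exact Finset.mem_range.mpr (hM v hv)
  rw [← Finset.sum_fiberwise_of_maps_to hmap (fun v => (dnSet G' v).ncard)]
  obtain _ | L := M
  · simp
  rw [Finset.sum_range_succ' , Finset.sum_range_succ]
  have h0 : ∑ v ∈ hfin.toFinset.filter (fun v : V s => v.1 = 0),
      (dnSet G' v).ncard = 0 := by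
    apply Finset.sum_eq_zero
    intro v hv
    rw [Finset.mem_filter] at hv
    exact dn_level_zero hv.2
  have hL : ECount hfin L = 0 := by
    rw [ECount]
    apply Finset.card_eq_zero.mpr
    rw [Finset.filter_eq_empty_iff]
    intro p hp
    rw [mem_EP] at hp
    have h2 := hM p.2 (G'.edge_vert (G'.adj_symm hp.1))
    intro h1
    omega
  rw [h0, hL, add_zero, add_zero]
  exact Finset.sum_congr rfl (fun k _ => (ECount_eq_sum_dd hfin k).symm)

lemma sum_intr_deg_eq (M : ℕ) (hM : ∀ v ∈ G'.verts, v.1 < M) :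
    ∑ v ∈ hfin.toFinset.filter (fun v => Intr (G' := G') v), (G'.neighborSet v).ncard
      = ∑ k ∈ Finset.range M, ICount hfin k * (s (k + 1) + dval s k) := by
  have hmap : ∀ v ∈ hfin.toFinset.filter (fun v => Intr (G' := G') v),
      (fun v : V s => v.1) v ∈ Finset.range M := by
    intro v hv
    rw [Finset.mem_filter, Set.Finite.mem_toFinset] at hv
    exact Finset.mem_range.mpr (hM v hv.1)
  rw [← Finset.sum_fiberwise_of_maps_to hmap (fun v => (G'.neighborSet v).ncard)]
  refine Finset.sum_congr rfl (fun k _ => ?_)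
  rw [Finset.filter_filter, ICount]
  rw [Finset.sum_congr rfl (fun v hv => ?_), Finset.sum_const, smul_eq_mul]
  rw [Finset.mem_filter] at hv
  obtain ⟨-, hintr, hlvl⟩ := hv
  rw [deg_split hfin, hintr.ud, hlvl]
  congr 1
  rcases Nat.eq_zero_or_eq_succ_pred k with hk | hk
  · subst hk
    rw [dn_level_zero hlvl, dval]; simp
  · rw [hk] at hlvl ⊢
    rw [hintr.dd hlvl, dval]
    simp

lemma EP_nonempty (hedge : G'.edgeSet.Nonempty) : (EP hfin).Nonempty := by
  obtain ⟨e, he⟩ := hedge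
  rw [edgeSet_eq_image hfin] at he
  simp only [Finset.coe_image, Set.mem_image, Finset.mem_coe] at he
  obtain ⟨p, hp, -⟩ := he
  exact ⟨p, hp⟩

lemma vol_pos (hfin : G'.verts.Finite) (hℓ : ∀ n, 0 < ℓ n) (hedge : G'.edgeSet.Nonempty) :
    0 < ∑ᶠ e ∈ G'.edgeSet, antitreeEdgeLength s ℓ e := by
  rw [vol_eq_sum_EP hfin]
  exact Finset.sum_pos (fun p _ => hℓ _) (EP_nonempty hfin hedge)

lemma bdry_set_eq :
    { v ∈ G'.verts |
        (G'.neighborSet v).ncard < ((antitreeGraph s).neighborSet v).ncard }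
      = ↑(hfin.toFinset.filter
          (fun v => (G'.neighborSet v).ncard < ((antitreeGraph s).neighborSet v).ncard)) := by
  ext v
  simp only [Set.mem_setOf_eq, Finset.coe_filter, Set.Finite.mem_toFinset]

lemma lower_bound (hfin : G'.verts.Finite) (hs : ∀ n, 1 ≤ s n) (hℓ : ∀ n, 0 < ℓ n) (c : ℝ) (hc : 0 ≤ c)
    (hcF : ∀ k, c * (∑ j ∈ Finset.range (k + 1),
        (s j : ℝ) * (s (j + 1) : ℝ) * ℓ j) ≤ (s k : ℝ) * (s (k + 1) : ℝ))
    (hedge : G'.edgeSet.Nonempty) :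
    c ≤ (∑ᶠ v ∈ { v ∈ G'.verts |
            (G'.neighborSet v).ncard < ((antitreeGraph s).neighborSet v).ncard },
          ((G'.neighborSet v).ncard : ℝ)) /
        (∑ᶠ e ∈ G'.edgeSet, antitreeEdgeLength s ℓ e) := by
  classical
  set M : ℕ := (hfin.toFinset.sup (fun v : V s => v.1)) + 1 with hMdef
  have hM : ∀ v ∈ G'.verts, v.1 < M := by
    intro v hv
    have : v.1 ≤ hfin.toFinset.sup (fun v : V s => v.1) :=
      Finset.le_sup (Set.Finite.mem_toFinset hfin |>.mpr hv)
    omega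
  rw [le_div_iff₀ (vol_pos ℓ hfin hℓ hedge)]
  -- rewrite the numerator
  rw [bdry_set_eq hfin, finsum_mem_coe_finset]
  -- numerator = total degree - interior degree
  have hsplit :
      (∑ v ∈ hfin.toFinset.filter
          (fun v => (G'.neighborSet v).ncard < ((antitreeGraph s).neighborSet v).ncard),
          ((G'.neighborSet v).ncard : ℝ))
      = (∑ v ∈ hfin.toFinset, ((G'.neighborSet v).ncard : ℝ))
        - ∑ v ∈ hfin.toFinset.filter (fun v => Intr (G' := G') v),
            ((G'.neighborSet v).ncard : ℝ) := by
    have h1 := Finset.sum_filter_add_sum_filter_not hfin.toFinset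
      (fun v => (G'.neighborSet v).ncard < ((antitreeGraph s).neighborSet v).ncard)
      (fun v => ((G'.neighborSet v).ncard : ℝ))
    have h2 : hfin.toFinset.filter
        (fun v => ¬ (G'.neighborSet v).ncard < ((antitreeGraph s).neighborSet v).ncard)
        = hfin.toFinset.filter (fun v => Intr (G' := G') v) := by
      apply Finset.filter_congr
      intro v hv
      simp only [not_bdry_iff hfin v]
    rw [h2] at h1
    linarith
  rw [hsplit]
  -- total degree
  have htot : (∑ v ∈ hfin.toFinset, ((G'.neighborSet v).ncard : ℝ))
      = ∑ k ∈ Finset.range M, 2 * (ECount hfin k : ℝ) := by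
    have : ∀ v ∈ hfin.toFinset,
        ((G'.neighborSet v).ncard : ℝ)
          = ((upSet G' v).ncard : ℝ) + ((dnSet G' v).ncard : ℝ) := by
      intro v _
      rw [deg_split hfin]
      push_cast
      ring
    rw [Finset.sum_congr rfl this, Finset.sum_add_distrib]
    have hu := sum_ud_eq hfin M hM
    have hd := sum_dd_eq hfin M hM
    have hu' : (∑ v ∈ hfin.toFinset, ((upSet G' v).ncard : ℝ))
        = ∑ k ∈ Finset.range M, (ECount hfin k : ℝ) := by
      exact_mod_cast congrArg (Nat.cast : ℕ → ℝ) hu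
    have hd' : (∑ v ∈ hfin.toFinset, ((dnSet G' v).ncard : ℝ))
        = ∑ k ∈ Finset.range M, (ECount hfin k : ℝ) := by
      exact_mod_cast congrArg (Nat.cast : ℕ → ℝ) hd
    rw [hu', hd']
    rw [← Finset.sum_add_distrib]
    exact Finset.sum_congr rfl (fun k _ => by ring)
  -- interior degree
  have hintr : (∑ v ∈ hfin.toFinset.filter (fun v => Intr (G' := G') v),
        ((G'.neighborSet v).ncard : ℝ))
      = ∑ k ∈ Finset.range M,
          ((ICount hfin (k + 1) : ℝ) * (s k : ℝ) + (ICount hfin k : ℝ) * (s (k + 1) : ℝ)) := by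
    have h1 := sum_intr_deg_eq hfin M hM
    have h1' : (∑ v ∈ hfin.toFinset.filter (fun v => Intr (G' := G') v),
          ((G'.neighborSet v).ncard : ℝ))
        = ∑ k ∈ Finset.range M, ((ICount hfin k : ℝ) * ((s (k+1) : ℝ) + (dval s k : ℝ))) := by
      exact_mod_cast congrArg (Nat.cast : ℕ → ℝ) h1
    rw [h1']
    -- reshuffle the dval part
    have hIM : ICount hfin M = 0 := by
      rw [ICount]
      apply Finset.card_eq_zero.mpr
      rw [Finset.filter_eq_empty_iff]
      intro v hv
      rw [Set.Finite.mem_toFinset] at hv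
      have := hM v hv
      rintro ⟨-, h⟩
      omega
    have expand : ∀ k, (ICount hfin k : ℝ) * ((s (k+1) : ℝ) + (dval s k : ℝ))
        = (ICount hfin k : ℝ) * (s (k+1) : ℝ) + (ICount hfin k : ℝ) * (dval s k : ℝ) := by
      intro k; ring
    rw [Finset.sum_congr rfl (fun k _ => expand k), Finset.sum_add_distrib]
    have hshift : (∑ k ∈ Finset.range M, (ICount hfin k : ℝ) * (dval s k : ℝ))
        = ∑ k ∈ Finset.range M, (ICount hfin (k + 1) : ℝ) * (s k : ℝ) := by
      obtain _ | L := M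
      · simp
      rw [Finset.sum_range_succ' (fun k => (ICount hfin k : ℝ) * (dval s k : ℝ)),
        Finset.sum_range_succ (fun k => (ICount hfin (k + 1) : ℝ) * (s k : ℝ))]
      have : (dval s 0 : ℝ) = 0 := by simp [dval]
      rw [this, mul_zero, add_zero]
      have hlast : ((ICount hfin (L + 1) : ℝ)) * (s L : ℝ) = 0 := by
        rw [hIM]; simp
      rw [hlast, add_zero]
      refine Finset.sum_congr rfl (fun k _ => ?_)
      have hd : dval s (k + 1) = s k := by simp [dval]
      rw [hd]
    rw [hshift, ← Finset.sum_add_distrib]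
    exact Finset.sum_congr rfl (fun k _ => by ring)
  rw [htot, hintr]
  -- the volume
  rw [vol_eq_sum_levels hfin ℓ hM]
  -- apply the key numeric inequality
  have hkey := at_key (fun n => (s n : ℝ))
    (fun n => by show (1:ℝ) ≤ ((s n : ℕ) : ℝ); exact_mod_cast hs n) ℓ hℓ c hc hcF
    (fun k => (ECount hfin k : ℝ)) (fun k => (ICount hfin k : ℝ))
    (fun k => by positivity) (fun k => by positivity)
    (fun k => by
      show ((ICount hfin k : ℕ) : ℝ) * ((s (k+1) : ℕ) : ℝ) ≤ ((ECount hfin k : ℕ) : ℝ)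
      exact_mod_cast ICount_mul_le_ECount hfin k)
    (fun k => by
      show ((ICount hfin (k+1) : ℕ) : ℝ) * ((s k : ℕ) : ℝ) ≤ ((ECount hfin k : ℕ) : ℝ)
      exact_mod_cast ICount_succ_mul_le_ECount hfin k)
    M (by
      have hIM : ICount hfin M = 0 := by
        rw [ICount]
        apply Finset.card_eq_zero.mpr
        rw [Finset.filter_eq_empty_iff]
        intro v hv
        rw [Set.Finite.mem_toFinset] at hv
        have := hM v hv
        rintro ⟨-, h⟩
        omega
      show ((ICount hfin M : ℕ) : ℝ) = 0
      exact_mod_cast hIM)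
  calc c * ∑ k ∈ Finset.range M, (ECount hfin k : ℝ) * ℓ k
      ≤ ∑ k ∈ Finset.range M,
          (2 * (ECount hfin k : ℝ) - (ICount hfin (k+1) : ℝ) * (s k : ℝ)
            - (ICount hfin k : ℝ) * (s (k+1) : ℝ)) := hkey
    _ = _ := by
        rw [Finset.sum_sub_distrib, Finset.sum_sub_distrib, Finset.sum_add_distrib]
        ring

end counting

section ball
variable (s : ℕ → ℕ) (n : ℕ)

def ballSubgraph : (antitreeGraph s).Subgraph where
  verts := {v : V s | v.1 ≤ n + 1}
  Adj v w := (antitreeGraph s).Adj v w ∧ v.1 ≤ n + 1 ∧ w.1 ≤ n + 1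
  adj_sub h := h.1
  edge_vert h := h.2.1
  symm := ⟨by rintro v w ⟨h1, h2, h3⟩; exact ⟨h1.symm, h3, h2⟩⟩

lemma ball_verts_finite : (ballSubgraph s n).verts.Finite := by
  have : (ballSubgraph s n).verts
      = ↑((Finset.range (n + 2)).sigma (fun k => (Finset.univ : Finset (Fin (s k))))) := by
    ext v
    simp only [ballSubgraph, Set.mem_setOf_eq, Finset.coe_sigma, Set.mem_sigma_iff,
      Finset.mem_coe, Finset.mem_range, Finset.mem_univ, and_true]
    omega
  rw [this]
  exact Finset.finite_toSet _

lemma ball_adj {v w : V s} :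
    (ballSubgraph s n).Adj v w
      ↔ (v.1 = w.1 + 1 ∨ w.1 = v.1 + 1) ∧ v.1 ≤ n + 1 ∧ w.1 ≤ n + 1 := Iff.rfl

lemma ball_intr {v : V s} (hv : v.1 ≤ n) : Intr (G' := ballSubgraph s n) v := by
  rw [Intr]
  ext w
  simp only [SimpleGraph.Subgraph.mem_neighborSet, SimpleGraph.mem_neighborSet, ball_adj,
    adj_iff]
  constructor
  · rintro ⟨h, -, -⟩; exact h
  · intro h; exact ⟨h, by omega, by rcases h with h | h <;> omega⟩

lemma ball_nbr_top {v : V s} (hv : v.1 = n + 1) :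
    (ballSubgraph s n).neighborSet v = {w : V s | w.1 = n} := by
  ext w
  simp only [SimpleGraph.Subgraph.mem_neighborSet, ball_adj, Set.mem_setOf_eq]
  constructor
  · rintro ⟨h | h, h2, h3⟩ <;> omega
  · intro h
    exact ⟨Or.inl (by omega), by omega, by omega⟩

lemma ball_bdry_set (hs : ∀ m, 1 ≤ s m) :
    { v ∈ (ballSubgraph s n).verts |
        ((ballSubgraph s n).neighborSet v).ncard
          < ((antitreeGraph s).neighborSet v).ncard }
      = ↑(levelFinset s (n + 1)) := by
  ext v
  simp only [Set.mem_setOf_eq, coe_levelFinset]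
  constructor
  · rintro ⟨hv, hlt⟩
    by_contra hne
    have hle : v.1 ≤ n := by
      have : v.1 ≤ n + 1 := hv
      omega
    have := ball_intr s n hle
    rw [Intr] at this
    rw [this] at hlt
    exact lt_irrefl _ hlt
  · intro hv
    refine ⟨le_of_eq hv, ?_⟩
    rw [ball_nbr_top s n hv, ncard_levelSet, ncard_nbrA, hv]
    have := hs (n + 1 + 1)
    simp only [Nat.add_sub_cancel, if_neg (Nat.succ_ne_zero n)]
    omega

lemma ball_numerator (hs : ∀ m, 1 ≤ s m) :
    (∑ᶠ v ∈ { v ∈ (ballSubgraph s n).verts |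
        ((ballSubgraph s n).neighborSet v).ncard
          < ((antitreeGraph s).neighborSet v).ncard },
      (((ballSubgraph s n).neighborSet v).ncard : ℝ))
      = (s (n + 1) : ℝ) * (s n : ℝ) := by
  rw [ball_bdry_set s n hs, finsum_mem_coe_finset]
  have hconst : ∀ v ∈ levelFinset s (n + 1),
      (((ballSubgraph s n).neighborSet v).ncard : ℝ) = (s n : ℝ) := by
    intro v hv
    rw [mem_levelFinset] at hv
    rw [ball_nbr_top s n hv, ncard_levelSet]
  rw [Finset.sum_congr rfl hconst, Finset.sum_const, card_levelFinset, nsmul_eq_mul]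

lemma ball_level_filter {k : ℕ} (hk : k ≤ n + 1) :
    (ball_verts_finite s n).toFinset.filter (fun v : V s => v.1 = k)
      = levelFinset s k := by
  ext v
  simp only [Finset.mem_filter, Set.Finite.mem_toFinset, mem_levelFinset]
  constructor
  · rintro ⟨-, h⟩; exact h
  · intro h
    refine ⟨?_, h⟩
    show v.1 ≤ n + 1
    omega

lemma ball_ECount_le {k : ℕ} (hk : k ≤ n) :
    ECount (ball_verts_finite s n) k = s k * s (k + 1) := by
  rw [ECount_eq_sum_ud, ball_level_filter s n (by omega : k ≤ n + 1)]
  have hconst : ∀ v ∈ levelFinset s k,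
      (upSet (ballSubgraph s n) v).ncard = s (k + 1) := by
    intro v hv
    rw [mem_levelFinset] at hv
    have hIv : Intr (G' := ballSubgraph s n) v := ball_intr s n (hv.trans_le hk)
    rw [hIv.ud, hv]
  rw [Finset.sum_congr rfl hconst, Finset.sum_const, card_levelFinset, smul_eq_mul]


lemma ball_ECount_top : ECount (ball_verts_finite s n) (n + 1) = 0 := by
  rw [ECount]
  apply Finset.card_eq_zero.mpr
  rw [Finset.filter_eq_empty_iff]
  intro p hp
  rw [mem_EP] at hp
  have h2 : p.2 ∈ (ballSubgraph s n).verts :=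
    (ballSubgraph s n).edge_vert ((ballSubgraph s n).adj_symm hp.1)
  have h2' : p.2.1 ≤ n + 1 := h2
  have := hp.2
  omega

lemma ball_volume (ℓ : ℕ → ℝ) :
    (∑ᶠ e ∈ (ballSubgraph s n).edgeSet, antitreeEdgeLength s ℓ e)
      = ∑ k ∈ Finset.range (n + 1), (s k : ℝ) * (s (k + 1) : ℝ) * ℓ k := by
  rw [vol_eq_sum_levels (ball_verts_finite s n) ℓ (M := n + 2) (fun v hv => by
    have : v.1 ≤ n + 1 := hv
    omega)]
  rw [Finset.sum_range_succ]
  have htop : ((ECount (ball_verts_finite s n) (n + 1) : ℕ) : ℝ) * ℓ (n + 1) = 0 := by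
    rw [ball_ECount_top]
    simp
  rw [htop, add_zero]
  refine Finset.sum_congr rfl (fun k hk => ?_)
  rw [Finset.mem_range] at hk
  have : ECount (ball_verts_finite s n) k = s k * s (k + 1) :=
    ball_ECount_le s n (by omega)
  rw [this]
  push_cast
  ring


lemma ball_edge_nonempty (hs : ∀ m, 1 ≤ s m) : (ballSubgraph s n).edgeSet.Nonempty := by
  refine ⟨s(⟨n, ⟨0, hs n⟩⟩, ⟨n + 1, ⟨0, hs (n + 1)⟩⟩), ?_⟩
  rw [SimpleGraph.Subgraph.mem_edgeSet, ball_adj]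
  exact ⟨Or.inr rfl, Nat.le_succ n, le_refl (n + 1)⟩

lemma ball_connected (hs0 : s 0 = 1) (hs : ∀ m, 1 ≤ s m) :
    ((antitreeGraph s).induce (ballSubgraph s n).verts).Connected := by
  have hroot : (⟨0, ⟨0, hs 0⟩⟩ : V s) ∈ (ballSubgraph s n).verts := by
    show (0 : ℕ) ≤ n + 1
    omega
  set root : ((ballSubgraph s n).verts : Set (V s)) := ⟨⟨0, ⟨0, hs 0⟩⟩, hroot⟩ with hrootdef
  have hreach : ∀ (k : ℕ) (i : Fin (s k)) (h : (⟨k, i⟩ : V s) ∈ (ballSubgraph s n).verts),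
      ((antitreeGraph s).induce (ballSubgraph s n).verts).Reachable ⟨⟨k, i⟩, h⟩ root := by
    intro k
    induction k with
    | zero =>
      intro i h
      have hi : i = ⟨0, hs 0⟩ := by
        apply Fin.ext
        show i.1 = 0
        have h2 := i.2
        omega
      subst hi
      exact SimpleGraph.Reachable.refl _
    | succ k ih =>
      intro i h
      have hk : (⟨k, ⟨0, hs k⟩⟩ : V s) ∈ (ballSubgraph s n).verts := by
        have : k + 1 ≤ n + 1 := h
        show k ≤ n + 1
        omega
      have hadj : ((antitreeGraph s).induce (ballSubgraph s n).verts).Adj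
          ⟨⟨k + 1, i⟩, h⟩ ⟨⟨k, ⟨0, hs k⟩⟩, hk⟩ := by
        show (antitreeGraph s).Adj ⟨k + 1, i⟩ ⟨k, ⟨0, hs k⟩⟩
        exact Or.inl rfl
      exact (hadj.reachable).trans (ih ⟨0, hs k⟩ hk)
  have hpre : ((antitreeGraph s).induce (ballSubgraph s n).verts).Preconnected := by
    intro u v
    obtain ⟨⟨ku, iu⟩, hu⟩ := u
    obtain ⟨⟨kv, iv⟩, hv⟩ := v
    exact (hreach ku iu hu).trans (hreach kv iv hv).symm
  haveI : Nonempty ((ballSubgraph s n).verts : Set (V s)) := ⟨root⟩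
  exact ⟨hpre⟩

end ball
end ATaux

/-- Theorem 7.1.  The isoperimetric constant of a radially
symmetric antitree equals `inf_n sₙ sₙ₊₁ / (Σ_{k ≤ n} sₖ sₖ₊₁ ℓₖ)`.  The
infimum on the left runs over all subgraphs with finitely many vertices, at
least one edge, and whose induced graph on the vertex set is connected;
`deg(∂G')` is the sum over boundary vertices of their degree in `G'`, and
`vol(G')` is the total length of the edges of `G'`. -/
theorem antitree_isoperimetric_constant (s : ℕ → ℕ) (hs0 : s 0 = 1)
    (hs : ∀ n, 1 ≤ s n) (ℓ : ℕ → ℝ) (hℓ : ∀ n, 0 < ℓ n) :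
    sInf { r : ℝ |
      ∃ G' : (antitreeGraph s).Subgraph,
        G'.verts.Finite ∧ G'.edgeSet.Nonempty ∧
        ((antitreeGraph s).induce G'.verts).Connected ∧
        r = (∑ᶠ v ∈ { v ∈ G'.verts |
                (G'.neighborSet v).ncard < ((antitreeGraph s).neighborSet v).ncard },
              ((G'.neighborSet v).ncard : ℝ)) /
            (∑ᶠ e ∈ G'.edgeSet, antitreeEdgeLength s ℓ e) } =
    ⨅ n : ℕ, ((s n : ℝ) * (s (n + 1) : ℝ)) /
      (∑ k ∈ Finset.range (n + 1), (s k : ℝ) * (s (k + 1) : ℝ) * ℓ k) := by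
  classical
  set F : ℕ → ℝ := fun n => ((s n : ℝ) * (s (n + 1) : ℝ)) /
      (∑ k ∈ Finset.range (n + 1), (s k : ℝ) * (s (k + 1) : ℝ) * ℓ k) with hF
  have hden : ∀ n, 0 < ∑ k ∈ Finset.range (n + 1), (s k : ℝ) * (s (k + 1) : ℝ) * ℓ k := by
    intro n
    apply Finset.sum_pos
    · intro j _
      have h1 : (0:ℝ) < (s j : ℝ) := by exact_mod_cast hs j
      have h2 : (0:ℝ) < (s (j+1) : ℝ) := by exact_mod_cast hs (j+1)
      have h3 := hℓ j
      positivity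
    · exact Finset.nonempty_range_iff.mpr (Nat.succ_ne_zero n)
  have hF0 : ∀ n, 0 ≤ F n := by
    intro n
    apply div_nonneg _ (hden n).le
    positivity
  have hbdd : BddBelow (Set.range F) := ⟨0, by rintro x ⟨n, rfl⟩; exact hF0 n⟩
  set c : ℝ := ⨅ n, F n with hcdef
  have hc0 : 0 ≤ c := le_ciInf hF0
  have hcF : ∀ k, c * (∑ j ∈ Finset.range (k + 1),
      (s j : ℝ) * (s (j + 1) : ℝ) * ℓ j) ≤ (s k : ℝ) * (s (k + 1) : ℝ) := by
    intro k
    have hck : c ≤ F k := ciInf_le hbdd k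
    calc c * (∑ j ∈ Finset.range (k + 1), (s j : ℝ) * (s (j + 1) : ℝ) * ℓ j)
        ≤ F k * (∑ j ∈ Finset.range (k + 1), (s j : ℝ) * (s (j + 1) : ℝ) * ℓ j) :=
          mul_le_mul_of_nonneg_right hck (hden k).le
      _ = (s k : ℝ) * (s (k + 1) : ℝ) := div_mul_cancel₀ _ (hden k).ne'
  have hlow : ∀ r ∈ { r : ℝ |
      ∃ G' : (antitreeGraph s).Subgraph,
        G'.verts.Finite ∧ G'.edgeSet.Nonempty ∧
        ((antitreeGraph s).induce G'.verts).Connected ∧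
        r = (∑ᶠ v ∈ { v ∈ G'.verts |
                (G'.neighborSet v).ncard < ((antitreeGraph s).neighborSet v).ncard },
              ((G'.neighborSet v).ncard : ℝ)) /
            (∑ᶠ e ∈ G'.edgeSet, antitreeEdgeLength s ℓ e) }, c ≤ r := by
    rintro r ⟨G', hfin, hedge, -, rfl⟩
    exact ATaux.lower_bound ℓ hfin hs hℓ c hc0 hcF hedge
  have hmem : ∀ n, F n ∈ { r : ℝ |
      ∃ G' : (antitreeGraph s).Subgraph,
        G'.verts.Finite ∧ G'.edgeSet.Nonempty ∧
        ((antitreeGraph s).induce G'.verts).Connected ∧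
        r = (∑ᶠ v ∈ { v ∈ G'.verts |
                (G'.neighborSet v).ncard < ((antitreeGraph s).neighborSet v).ncard },
              ((G'.neighborSet v).ncard : ℝ)) /
            (∑ᶠ e ∈ G'.edgeSet, antitreeEdgeLength s ℓ e) } := by
    intro n
    refine ⟨ATaux.ballSubgraph s n, ATaux.ball_verts_finite s n,
      ATaux.ball_edge_nonempty s n hs, ATaux.ball_connected s n hs0 hs, ?_⟩
    rw [ATaux.ball_numerator s n hs, ATaux.ball_volume s n ℓ, hF]
    rw [mul_comm ((s (n+1) : ℝ)) ((s n : ℝ))]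
  apply le_antisymm
  · exact le_ciInf (fun n => csInf_le ⟨c, hlow⟩ (hmem n))
  · exact le_csInf ⟨F 0, hmem 0⟩ hlow
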